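/- Let V be a real inner product space, let 𝓀 and 𝓅 be linear subspaces of V that are mutually orthogonal (i.e., ⟨A, P⟩ = 0 for every A ∈ 𝓀 and P ∈ 𝓅), and let φ : V → V be a linear isometry. If P, Q ∈ 𝓅 and A ∈ 𝓀 satisfy P − Q = A − φ(A), then P = Q. -/

import Mathlib

open scoped RealInnerProductSpace

/-- **Uniqueness of horizontal lifts (algebraic core).**
If `𝓀` and `𝓅` are mutually orthogonal subspaces of a real inner product space `V`,
`φ : V → V` is a linear isometry, `P, Q ∈ 𝓅`, `A ∈ 𝓀` and `P - Q = A - φ A`,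
then `P = Q`. -/
theorem stmt0 {V : Type*} [NormedAddCommGroup V] [InnerProductSpace ℝ V]
    (𝓀 𝓅 : Submodule ℝ V)
    (hortho : ∀ A ∈ 𝓀, ∀ P ∈ 𝓅, ⟪A, P⟫ = 0)
    (φ : V →ₗ[ℝ] V)
    (hiso : ∀ u v : V, ⟪φ u, φ v⟫ = ⟪u, v⟫)
    (P Q A : V) (hP : P ∈ 𝓅) (hQ : Q ∈ 𝓅) (hA : A ∈ 𝓀)
    (heq : P - Q = A - φ A) : P = Q := by
  have hDA : ⟪A, P - Q⟫ = 0 := hortho A hA _ (Submodule.sub_mem _ hP hQ)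
  have hphi : ⟪φ A, φ A⟫ = ⟪A, A⟫ := hiso A A
  have h1 : ⟪P - Q, P - Q⟫ = ⟪A - φ A, A - φ A⟫ := by rw [heq]
  have h2 : ⟪A, P - Q⟫ = ⟪A, A - φ A⟫ := by rw [heq]
  have hsym : ⟪A, φ A⟫ = ⟪φ A, A⟫ := real_inner_comm _ _
  have hexp1 : ⟪A - φ A, A - φ A⟫ = ⟪A, A⟫ - ⟪A, φ A⟫ - ⟪φ A, A⟫ + ⟪φ A, φ A⟫ := by
    simp only [inner_sub_left, inner_sub_right]; ring
  have hexp2 : ⟪A, A - φ A⟫ = ⟪A, A⟫ - ⟪A, φ A⟫ := by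
    simp [inner_sub_right]
  have hz : ⟪P - Q, P - Q⟫ = 0 := by
    rw [h1, hexp1]
    have : ⟪A, A⟫ - ⟪A, φ A⟫ = 0 := by rw [← hexp2, ← h2, hDA]
    nlinarith [this, hphi, hsym]
  have : P - Q = 0 := inner_self_eq_zero.mp hz
  exact sub_eq_zero.mp this
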